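/- Let β > 0 and let T_t(x,y) = (xy)^{1/2}/(2t) I_{β-1/2}(xy/(2t)) exp(-(x²+y²)/(4t)) be the Bessel heat kernel on (0,∞). Then there is a constant C such that for every y > 0: ∫_0^∞ x^{-1} ∫_0^∞ T_t(x,y) t^{-1/2} dt dx ≤ C. (This is the condition (A6) for the potential V(x) = -β/x appearing in the Bessel Riesz transform.) -/

import Mathlib

open Real Set MeasureTheory

/-- Modified Bessel function of the first kind (series definition). -/
noncomputable def besselI (ν x : ℝ) : ℝ :=
  ∑' n : ℕ, (x/2) ^ ν * (x/2) ^ (2*n) / (Nat.factorial n * Real.Gamma (n + ν + 1))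

/-- The Bessel heat kernel. -/
noncomputable def TB (β t x y : ℝ) : ℝ :=
  (x*y) ^ ((1:ℝ)/2) / (2*t) * besselI (β - 1/2) (x*y/(2*t)) * Real.exp (-(x^2+y^2)/(4*t))


lemma gauss_int {s b : ℝ} (hs : 0 < s) (hb : 0 < b) :
    ∫ x in Ioi (0:ℝ), x ^ (s - 1) * Real.exp (-b * x ^ 2) =
      b ^ (-(s/2)) * (1/2) * Real.Gamma (s/2) := by
  have h := integral_rpow_mul_exp_neg_mul_rpow (p := 2) (q := s - 1) (b := b)
    (by norm_num) (by linarith) hb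
  have heq : ∀ x ∈ Ioi (0:ℝ), x ^ (s-1) * Real.exp (-b * x ^ (2:ℝ))
      = x ^ (s-1) * Real.exp (-b * x ^ 2) := by
    intro x hx
    rw [show (2:ℝ) = ((2:ℕ):ℝ) by norm_num, Real.rpow_natCast]
  rw [← setIntegral_congr_fun measurableSet_Ioi heq, h, neg_div]
  norm_num

lemma gauss_integrable {s b : ℝ} (hs : 0 < s) (hb : 0 < b) :
    IntegrableOn (fun x : ℝ => x ^ (s - 1) * Real.exp (-b * x ^ 2)) (Ioi 0) :=
  integrableOn_rpow_mul_exp_neg_mul_sq hb (by linarith)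

private lemma aux_comp (m a : ℝ) : ∀ x ∈ Ioi (0:ℝ),
    (|(-1:ℝ)| * x ^ ((-1:ℝ) - 1)) • ((x ^ (-1:ℝ)) ^ (m-1) * Real.exp (-a * x ^ (-1:ℝ)))
    = x ^ (-m - 1) * Real.exp (-a / x) := by
  intro x hx
  rw [mem_Ioi] at hx
  rw [abs_neg, abs_one, one_mul, smul_eq_mul, ← Real.rpow_mul hx.le,
    Real.rpow_neg_one, ← mul_assoc, ← Real.rpow_add hx]
  rw [show -a * x⁻¹ = -a / x by ring, show (-1:ℝ) - 1 + -1 * (m-1) = -m - 1 by ring]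

lemma invgamma_int {m a : ℝ} (hm : 0 < m) (ha : 0 < a) :
    ∫ t in Ioi (0:ℝ), t ^ (-m - 1) * Real.exp (-a / t) =
      Real.Gamma m * a ^ (-m) := by
  have h := integral_comp_rpow_Ioi (fun u : ℝ => u ^ (m-1) * Real.exp (-a * u))
    (p := -1) (by norm_num)
  rw [setIntegral_congr_fun measurableSet_Ioi (aux_comp m a)] at h
  rw [h]
  have h2 := integral_rpow_mul_exp_neg_mul_rpow (p := 1) (q := m - 1) (b := a)
    (by norm_num) (by linarith) ha
  simp only [Real.rpow_one] at h2
  rw [h2]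
  rw [show m - 1 + 1 = m by ring]
  norm_num [mul_comm]

lemma invgamma_integrable {m a : ℝ} (hm : 0 < m) (ha : 0 < a) :
    IntegrableOn (fun t : ℝ => t ^ (-m - 1) * Real.exp (-a / t)) (Ioi 0) := by
  have h := (integrableOn_Ioi_comp_rpow_iff
    (fun u : ℝ => u ^ (m-1) * Real.exp (-a * u)) (p := -1) (by norm_num)).mpr ?_
  · exact (integrableOn_congr_fun (aux_comp m a) measurableSet_Ioi).mp h
  · have := integrableOn_rpow_mul_exp_neg_mul_rpow (p := 1) (s := m - 1) (b := a)
      (by linarith) (by norm_num) ha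
    simpa only [Real.rpow_one] using this


lemma gamma_mid_sq {a b : ℝ} (ha : 0 < a) (hb : 0 < b) :
    Real.Gamma ((a+b)/2) ^ 2 ≤ Real.Gamma a * Real.Gamma b := by
  have h := Real.convexOn_log_Gamma.2 (mem_Ioi.mpr ha) (mem_Ioi.mpr hb)
    (by norm_num : (0:ℝ) ≤ 1/2) (by norm_num : (0:ℝ) ≤ 1/2) (by norm_num)
  simp only [smul_eq_mul, Function.comp_apply] at h
  have hmid : (0:ℝ) < (a+b)/2 := by linarith
  have e1 : Real.Gamma ((a+b)/2) ^ 2 =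
      Real.exp (Real.log (Real.Gamma ((a+b)/2)) + Real.log (Real.Gamma ((a+b)/2))) := by
    rw [Real.exp_add, Real.exp_log (Real.Gamma_pos_of_pos hmid), sq]
  have e2 : Real.Gamma a * Real.Gamma b =
      Real.exp (Real.log (Real.Gamma a) + Real.log (Real.Gamma b)) := by
    rw [Real.exp_add, Real.exp_log (Real.Gamma_pos_of_pos ha),
      Real.exp_log (Real.Gamma_pos_of_pos hb)]
  rw [e1, e2]
  apply Real.exp_le_exp.mpr
  have : 1/2 * a + 1/2 * b = (a+b)/2 := by ring
  rw [this] at h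
  linarith

lemma gamma_ratio {x : ℝ} (hx : 0 < x) :
    Real.Gamma x * (x * Real.sqrt x) ≤ Real.Gamma (x + 3/2) := by
  have h1 := gamma_mid_sq (a := x + 1/2) (b := x + 3/2) (by linarith) (by linarith)
  rw [show (x + 1/2 + (x + 3/2))/2 = x + 1 by ring, Real.Gamma_add_one hx.ne'] at h1
  have h2 : Real.Gamma (x + 3/2) = (x + 1/2) * Real.Gamma (x + 1/2) := by
    rw [show x + 3/2 = (x + 1/2) + 1 by ring, Real.Gamma_add_one (by positivity)]
  have hg1 : 0 < Real.Gamma (x + 1/2) := Real.Gamma_pos_of_pos (by linarith)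
  have hgx : 0 < Real.Gamma x := Real.Gamma_pos_of_pos hx
  -- from h1 : (x * Γ x)^2 ≤ Γ(x+1/2) * Γ(x+3/2) = Γ(x+1/2)^2 * (x+1/2)
  have key : (x * Real.Gamma x)^2 ≤ Real.Gamma (x+1/2)^2 * (x+1/2) := by
    rw [h2] at h1; nlinarith [h1]
  have step : x * Real.Gamma x ≤ Real.Gamma (x+1/2) * Real.sqrt (x+1/2) := by
    have := Real.sqrt_le_sqrt key
    rwa [Real.sqrt_sq (by positivity), Real.sqrt_mul (by positivity),
      Real.sqrt_sq hg1.le] at this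
  have hs1 : Real.sqrt x ≤ Real.sqrt (x+1/2) := Real.sqrt_le_sqrt (by linarith)
  have hs2 : Real.sqrt (x+1/2) * Real.sqrt (x+1/2) = x + 1/2 :=
    Real.mul_self_sqrt (by linarith)
  have hs0 : 0 < Real.sqrt (x+1/2) := Real.sqrt_pos.mpr (by linarith)
  rw [h2]
  nlinarith [mul_le_mul_of_nonneg_right step hs0.le, Real.sqrt_nonneg x,
    mul_le_mul_of_nonneg_left hs1 (mul_pos hx hgx).le]

noncomputable def bA (β : ℝ) (n : ℕ) : ℝ :=
  Real.Gamma ((n:ℝ) + β/2) ^ 2 / (2 * (n.factorial : ℝ) * Real.Gamma ((n:ℝ) + β + 1/2))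

lemma bA_nonneg {β : ℝ} (hβ : 0 < β) (n : ℕ) : 0 ≤ bA β n := by
  have h1 : 0 < Real.Gamma ((n:ℝ) + β + 1/2) := Real.Gamma_pos_of_pos (by positivity)
  have h2 : (0:ℝ) < n.factorial := by exact_mod_cast n.factorial_pos
  unfold bA; positivity

lemma bA_le {β : ℝ} (hβ : 0 < β) {n : ℕ} (hn : 2 ≤ n) :
    bA β n ≤ 2 * (1 / (n:ℝ) ^ ((3:ℝ)/2)) := by
  have hn2 : (2:ℝ) ≤ (n:ℝ) := by exact_mod_cast hn
  set x : ℝ := (n:ℝ) + β - 1 with hxdef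
  have hx : 0 < x := by simp only [hxdef]; linarith
  have hgx : 0 < Real.Gamma x := Real.Gamma_pos_of_pos hx
  have hnum : Real.Gamma ((n:ℝ) + β/2) ^ 2 ≤ (n.factorial : ℝ) * Real.Gamma x := by
    have := gamma_mid_sq (a := (n:ℝ)+1) (b := x) (by positivity) hx
    rw [show ((n:ℝ)+1+x)/2 = (n:ℝ) + β/2 by simp only [hxdef]; ring,
      Real.Gamma_nat_eq_factorial] at this
    exact this
  have hden : Real.Gamma x * (x * Real.sqrt x) ≤ Real.Gamma ((n:ℝ) + β + 1/2) := by
    have := gamma_ratio hx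
    rwa [show x + 3/2 = (n:ℝ) + β + 1/2 by simp only [hxdef]; ring] at this
  have hfac : (0:ℝ) < n.factorial := by exact_mod_cast n.factorial_pos
  have hG : 0 < Real.Gamma ((n:ℝ) + β + 1/2) := Real.Gamma_pos_of_pos (by positivity)
  have hxs : 0 < x * Real.sqrt x := by positivity
  -- bA ≤ (n! Γx) / (2 n! Γx x √x) = 1/(2 x √x)
  have step1 : bA β n ≤ 1 / (2 * (x * Real.sqrt x)) := by
    unfold bA
    rw [div_le_div_iff₀ (by positivity) (by positivity)]
    calc Real.Gamma ((n:ℝ) + β/2) ^ 2 * (2 * (x * Real.sqrt x))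
        ≤ ((n.factorial : ℝ) * Real.Gamma x) * (2 * (x * Real.sqrt x)) := by
          apply mul_le_mul_of_nonneg_right hnum (by positivity)
      _ ≤ 1 * (2 * (n.factorial:ℝ) * Real.Gamma ((n:ℝ) + β + 1/2)) := by
          nlinarith [mul_le_mul_of_nonneg_left hden
            (by positivity : (0:ℝ) ≤ 2*(n.factorial:ℝ))]
  refine step1.trans ?_
  -- 1/(2 x √x) ≤ 2 / n^{3/2} since x ≥ n/2
  have hxn : (n:ℝ)/2 ≤ x := by simp only [hxdef]; linarith
  have hrw : (n:ℝ) ^ ((3:ℝ)/2) = (n:ℝ) * Real.sqrt (n:ℝ) := by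
    rw [show (3:ℝ)/2 = 1 + 1/2 by norm_num, Real.rpow_add (by linarith), Real.rpow_one,
      ← Real.sqrt_eq_rpow]
  rw [hrw, mul_one_div, div_le_div_iff₀ (by positivity) (by positivity)]
  have h4 : (n:ℝ) * Real.sqrt (n:ℝ) ≤ 4 * (x * Real.sqrt x) := by
    have e1 : (n:ℝ) ≤ 2*x := by linarith
    have e2 : Real.sqrt (n:ℝ) ≤ 2 * Real.sqrt x := by
      have h44 : Real.sqrt (4*x) = 2 * Real.sqrt x := by
        rw [Real.sqrt_mul (by norm_num : (0:ℝ) ≤ 4),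
          show (4:ℝ) = 2^2 by norm_num, Real.sqrt_sq (by norm_num : (0:ℝ) ≤ 2)]
      rw [← h44]
      exact Real.sqrt_le_sqrt (by linarith)
    nlinarith [mul_le_mul e1 e2 (Real.sqrt_nonneg _) (by linarith : (0:ℝ) ≤ 2*x)]
  nlinarith [Real.sqrt_nonneg (n:ℝ), h4]

lemma bA_summable {β : ℝ} (hβ : 0 < β) : Summable (bA β) := by
  apply (summable_nat_add_iff 2).mp
  have base : Summable (fun n : ℕ => 1 / (n:ℝ) ^ ((3:ℝ)/2)) :=
    Real.summable_one_div_nat_rpow.mpr (by norm_num)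
  have s2 : Summable (fun n : ℕ => 2 * (1 / ((n+2 : ℕ):ℝ) ^ ((3:ℝ)/2))) :=
    ((summable_nat_add_iff 2).mpr base).mul_left 2
  apply Summable.of_nonneg_of_le (fun n => bA_nonneg hβ (n+2))
    (fun n => bA_le hβ (by omega)) s2

noncomputable def bP (β y : ℝ) (n : ℕ) (t x : ℝ) : ℝ :=
  (x*y) ^ ((1:ℝ)/2) / (2*t) *
    ((x*y/(2*t)/2) ^ (β - 1/2) * (x*y/(2*t)/2) ^ (2*n) /
      (Nat.factorial n * Real.Gamma (n + (β - 1/2) + 1))) *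
    Real.exp (-(x^2+y^2)/(4*t)) * t ^ (-(1:ℝ)/2)

noncomputable def bK (β y : ℝ) (n : ℕ) : ℝ :=
  y ^ (β + 2*(n:ℝ)) * 4 ^ ((1:ℝ)/2 - (β + 2*(n:ℝ))) /
    (2 * ((n.factorial : ℝ) * Real.Gamma ((n:ℝ) + β + 1/2)))

noncomputable def bG (β y : ℝ) (n : ℕ) (t x : ℝ) : ℝ :=
  (bK β y n * (t ^ (-(β + 2*(n:ℝ)) - 1) * Real.exp (-(y^2/4) / t))) *
    (x ^ ((β + 2*(n:ℝ)) - 1) * Real.exp (-(1/(4*t)) * x^2))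

lemma bTB_eq (β y t x : ℝ) :
    TB β t x y * t ^ (-(1:ℝ)/2) = ∑' n : ℕ, bP β y n t x := by
  unfold TB besselI bP
  rw [← tsum_mul_left, ← tsum_mul_right, ← tsum_mul_right]

lemma term_eq {β y : ℝ} (hβ : 0 < β) (hy : 0 < y) (n : ℕ) {t x : ℝ}
    (ht : 0 < t) (hx : 0 < x) :
    x⁻¹ * bP β y n t x = bG β y n t x := by
  unfold bP bG bK
  have h4t : (0:ℝ) < 4*t := by linarith
  have hxy : (0:ℝ) < x*y := mul_pos hx hy
  rw [show x*y/(2*t)/2 = x*y/(4*t) by ring]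
  rw [← Real.rpow_natCast (x*y/(4*t)) (2*n)]
  rw [← Real.rpow_add (by positivity)]
  push_cast
  rw [Real.div_rpow hxy.le h4t.le, Real.mul_rpow hx.le hy.le,
    Real.mul_rpow (by norm_num : (0:ℝ) ≤ 4) ht.le,
    Real.mul_rpow hx.le hy.le]
  rw [show (n:ℝ) + (β - 1/2) + 1 = (n:ℝ) + β + 1/2 by ring]
  rw [show -(x^2+y^2)/(4*t) = -(y^2/4)/t + (-(1/(4*t)) * x^2) by field_simp; ring,
    Real.exp_add]
  have h40 : (0:ℝ) < 4 := by norm_num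
  have e6 : Real.Gamma ((n:ℝ) + β + 1/2) ≠ 0 :=
    (Real.Gamma_pos_of_pos (by positivity)).ne'
  have e7 : ((n.factorial : ℝ)) ≠ 0 := by exact_mod_cast n.factorial_pos.ne'
  simp only [Real.rpow_add hx, Real.rpow_add hy, Real.rpow_add ht, Real.rpow_add h40,
    Real.rpow_sub hx, Real.rpow_sub hy, Real.rpow_sub ht, Real.rpow_sub h40,
    Real.rpow_neg hx.le, Real.rpow_neg hy.le, Real.rpow_neg ht.le, Real.rpow_neg h40.le,
    Real.rpow_one, Real.rpow_neg_one]
  have p1 : x ^ (β:ℝ) ≠ 0 := by positivity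
  have p2 : y ^ (β:ℝ) ≠ 0 := by positivity
  have p3 : t ^ (β:ℝ) ≠ 0 := by positivity
  have p4 : (4:ℝ) ^ (β:ℝ) ≠ 0 := by positivity
  have p5 : x ^ ((1:ℝ)/2) ≠ 0 := by positivity
  have p6 : y ^ ((1:ℝ)/2) ≠ 0 := by positivity
  have p7 : t ^ ((1:ℝ)/2) ≠ 0 := by positivity
  have p8 : (4:ℝ) ^ ((1:ℝ)/2) ≠ 0 := by positivity
  have p9 : x ^ (2*(n:ℝ)) ≠ 0 := by positivity
  have p10 : y ^ (2*(n:ℝ)) ≠ 0 := by positivity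
  have p11 : t ^ (2*(n:ℝ)) ≠ 0 := by positivity
  have p12 : (4:ℝ) ^ (2*(n:ℝ)) ≠ 0 := by positivity
  rw [show t ^ ((-1:ℝ)/2) = (t ^ ((1:ℝ)/2))⁻¹ by
    rw [← Real.rpow_neg ht.le]; norm_num]
  field_simp
lemma bK_nonneg {β y : ℝ} (hβ : 0 < β) (hy : 0 < y) (n : ℕ) : 0 ≤ bK β y n := by
  have h1 : 0 < Real.Gamma ((n:ℝ) + β + 1/2) := Real.Gamma_pos_of_pos (by positivity)
  have h2 : (0:ℝ) < n.factorial := by exact_mod_cast n.factorial_pos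
  unfold bK; positivity

lemma bG_meas (β y : ℝ) (n : ℕ) :
    Measurable (fun p : ℝ × ℝ => ENNReal.ofReal (bG β y n p.2 p.1)) := by
  unfold bG
  apply ENNReal.measurable_ofReal.comp
  fun_prop

lemma bG_lint {β y : ℝ} (hβ : 0 < β) (hy : 0 < y) (n : ℕ) :
    ∫⁻ x in Ioi (0:ℝ), ∫⁻ t in Ioi (0:ℝ), ENNReal.ofReal (bG β y n t x)
      = ENNReal.ofReal (bA β n) := by
  have hs0 : 0 < β + 2*(n:ℝ) := by positivity
  have hm0 : 0 < (β + 2*(n:ℝ))/2 := by positivity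
  rw [lintegral_lintegral_swap ((bG_meas β y n).aemeasurable)]
  have hx_int : ∀ t ∈ Ioi (0:ℝ), (∫⁻ x in Ioi (0:ℝ), ENNReal.ofReal (bG β y n t x))
      = ENNReal.ofReal ((bK β y n * 4 ^ ((β + 2*(n:ℝ))/2) * ((1/2) * Real.Gamma ((β + 2*(n:ℝ))/2)))
          * (t ^ (-((β + 2*(n:ℝ))/2) - 1) * Real.exp (-(y^2/4) / t))) := by
    intro t ht
    rw [mem_Ioi] at ht
    have h4t : (0:ℝ) < 1/(4*t) := by positivity
    have hc : 0 ≤ bK β y n * (t ^ (-(β + 2*(n:ℝ)) - 1) * Real.exp (-(y^2/4)/t)) := by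
      have := bK_nonneg hβ hy n
      positivity
    have e1 : (∫⁻ x in Ioi (0:ℝ), ENNReal.ofReal (bG β y n t x))
        = ENNReal.ofReal (bK β y n * (t ^ (-(β + 2*(n:ℝ)) - 1) * Real.exp (-(y^2/4)/t)))
          * ∫⁻ x in Ioi (0:ℝ),
              ENNReal.ofReal (x ^ ((β + 2*(n:ℝ)) - 1) * Real.exp (-(1/(4*t)) * x^2)) := by
      rw [← lintegral_const_mul' _ _ ENNReal.ofReal_ne_top]
      apply setLIntegral_congr_fun measurableSet_Ioi
      intro x hx
      dsimp only
      unfold bG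
      rw [ENNReal.ofReal_mul hc]
    rw [e1]
    rw [← ofReal_integral_eq_lintegral_ofReal (gauss_integrable hs0 h4t) ?_, gauss_int hs0 h4t]
    · rw [← ENNReal.ofReal_mul hc]
      congr 1
      have hq : (1/(4*t)) ^ (-((β + 2*(n:ℝ))/2)) = 4 ^ ((β + 2*(n:ℝ))/2) * t ^ ((β + 2*(n:ℝ))/2) := by
        rw [one_div, Real.inv_rpow (by positivity), ← Real.rpow_neg (by positivity), neg_neg,
          Real.mul_rpow (by norm_num) ht.le]
      rw [hq]
      rw [show -((β + 2*(n:ℝ))/2) - 1 = (-(β + 2*(n:ℝ)) - 1) + (β + 2*(n:ℝ))/2 by ring,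
        Real.rpow_add ht]
      ring
    · filter_upwards [ae_restrict_mem measurableSet_Ioi] with x hx
      have hx0 : (0:ℝ) < x := hx
      positivity
  rw [setLIntegral_congr_fun measurableSet_Ioi
    (by intro t ht; exact hx_int t ht)]
  have hc2 : 0 ≤ bK β y n * 4 ^ ((β + 2*(n:ℝ))/2) * ((1/2) * Real.Gamma ((β + 2*(n:ℝ))/2)) := by
    have h1 := bK_nonneg hβ hy n
    have h2 := Real.Gamma_pos_of_pos hm0
    positivity
  have e2 : (∫⁻ t in Ioi (0:ℝ), ENNReal.ofReal
        ((bK β y n * 4 ^ ((β + 2*(n:ℝ))/2) * ((1/2) * Real.Gamma ((β + 2*(n:ℝ))/2)))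
          * (t ^ (-((β + 2*(n:ℝ))/2) - 1) * Real.exp (-(y^2/4) / t))))
      = ENNReal.ofReal (bK β y n * 4 ^ ((β + 2*(n:ℝ))/2) * ((1/2) * Real.Gamma ((β + 2*(n:ℝ))/2)))
        * ∫⁻ t in Ioi (0:ℝ), ENNReal.ofReal (t ^ (-((β + 2*(n:ℝ))/2) - 1) * Real.exp (-(y^2/4) / t)) := by
    rw [← lintegral_const_mul' _ _ ENNReal.ofReal_ne_top]
    apply setLIntegral_congr_fun measurableSet_Ioi
    intro t ht
    dsimp only
    rw [ENNReal.ofReal_mul hc2]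
  rw [e2]
  have hy4 : (0:ℝ) < y^2/4 := by positivity
  rw [← ofReal_integral_eq_lintegral_ofReal (invgamma_integrable hm0 hy4) ?_, invgamma_int hm0 hy4]
  · rw [← ENNReal.ofReal_mul hc2]
    congr 1
    -- final real algebra
    unfold bK bA
    have hG2 : Real.Gamma ((n:ℝ) + β + 1/2) ≠ 0 := (Real.Gamma_pos_of_pos (by positivity)).ne'
    have hfac : ((n.factorial:ℝ)) ≠ 0 := by exact_mod_cast n.factorial_pos.ne'
    rw [show (β + 2*(n:ℝ))/2 = (n:ℝ) + β/2 by ring]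
    have hyy : (y^2/4) ^ (-((n:ℝ) + β/2)) = (y ^ (β + 2*(n:ℝ)))⁻¹ * 4 ^ ((n:ℝ) + β/2) := by
      rw [Real.div_rpow (by positivity) (by norm_num), ← Real.rpow_natCast y 2,
        ← Real.rpow_mul hy.le, Real.rpow_neg (by norm_num : (0:ℝ) ≤ 4), ← Real.rpow_neg hy.le]
      rw [show (((2:ℕ)):ℝ) * -((n:ℝ) + β/2) = -(β + 2*(n:ℝ)) by push_cast; ring,
        Real.rpow_neg hy.le]
      rw [div_eq_mul_inv, inv_inv]
    rw [hyy]
    have h42 : (4:ℝ) ^ ((1:ℝ)/2 - (β+2*(n:ℝ))) * (4 ^ ((n:ℝ)+β/2) * 4 ^ ((n:ℝ)+β/2)) = 2 := by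
      rw [← Real.rpow_add (by norm_num : (0:ℝ)<4), ← Real.rpow_add (by norm_num : (0:ℝ)<4)]
      rw [show (1:ℝ)/2 - (β+2*(n:ℝ)) + ((n:ℝ)+β/2 + ((n:ℝ)+β/2)) = 1/2 by ring]
      rw [show (4:ℝ) = 2^2 by norm_num, ← Real.rpow_natCast (2:ℝ) 2,
        ← Real.rpow_mul (by norm_num : (0:ℝ) ≤ 2)]
      norm_num
    have hy1 : y ^ (β + 2*(n:ℝ)) * (y ^ (β + 2*(n:ℝ)))⁻¹ = 1 :=
      mul_inv_cancel₀ (by positivity)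
    linear_combination (Real.Gamma ((n:ℝ)+β/2)^2 * (y ^ (β + 2*(n:ℝ)) * (y ^ (β + 2*(n:ℝ)))⁻¹)
        / (2*(2*((n.factorial:ℝ) * Real.Gamma ((n:ℝ) + β + 1/2))))) * h42
      + (Real.Gamma ((n:ℝ)+β/2)^2 / (2*((n.factorial:ℝ) * Real.Gamma ((n:ℝ) + β + 1/2)))) * hy1
  · filter_upwards [ae_restrict_mem measurableSet_Ioi] with t ht
    have ht0 : (0:ℝ) < t := ht
    positivity

lemma ofReal_tsum_le {f : ℕ → ℝ} (hf : ∀ n, 0 ≤ f n) :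
    ENNReal.ofReal (∑' n, f n) ≤ ∑' n, ENNReal.ofReal (f n) := by
  by_cases h : Summable f
  · exact (ENNReal.ofReal_tsum_of_nonneg hf h).le
  · rw [tsum_eq_zero_of_not_summable h]; simp

lemma ofReal_integral_le {μ : Measure ℝ} {f : ℝ → ℝ} (hf : 0 ≤ᵐ[μ] f) :
    ENNReal.ofReal (∫ a, f a ∂μ) ≤ ∫⁻ a, ENNReal.ofReal (f a) ∂μ := by
  by_cases hi : Integrable f μ
  · exact (ofReal_integral_eq_lintegral_ofReal hi hf).le
  · rw [integral_undef hi]; simp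

lemma bP_nonneg {β y : ℝ} (hβ : 0 < β) (hy : 0 < y) (n : ℕ) {t x : ℝ}
    (ht : 0 < t) (hx : 0 < x) : 0 ≤ bP β y n t x := by
  have hg : 0 < Real.Gamma ((n:ℝ) + (β - 1/2) + 1) := by
    apply Real.Gamma_pos_of_pos
    have : (0:ℝ) ≤ n := n.cast_nonneg
    linarith
  unfold bP
  have h1 : (0:ℝ) ≤ (x*y) ^ ((1:ℝ)/2) / (2*t) := by positivity
  have h2 : (0:ℝ) ≤ (x*y/(2*t)/2) ^ (β - 1/2) * (x*y/(2*t)/2) ^ (2*n) /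
      (Nat.factorial n * Real.Gamma ((n:ℝ) + (β - 1/2) + 1)) := by
    apply div_nonneg (by positivity)
    have : (0:ℝ) < Nat.factorial n := by exact_mod_cast n.factorial_pos
    positivity
  have h3 : (0:ℝ) ≤ Real.exp (-(x^2+y^2)/(4*t)) := (Real.exp_pos _).le
  have h4 : (0:ℝ) ≤ t ^ (-(1:ℝ)/2) := Real.rpow_nonneg ht.le _
  exact mul_nonneg (mul_nonneg (mul_nonneg h1 h2) h3) h4

lemma TB_tp_nonneg {β y : ℝ} (hβ : 0 < β) (hy : 0 < y) {t x : ℝ}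
    (ht : 0 < t) (hx : 0 < x) : 0 ≤ TB β t x y * t ^ (-(1:ℝ)/2) := by
  rw [bTB_eq]
  exact tsum_nonneg (fun n => bP_nonneg hβ hy n ht hx)

lemma bP_meas_t (β y x : ℝ) (n : ℕ) :
    Measurable (fun t : ℝ => ENNReal.ofReal (x⁻¹ * bP β y n t x)) := by
  unfold bP
  apply ENNReal.measurable_ofReal.comp
  fun_prop

theorem bessel_A6 (β : ℝ) (hβ : 0 < β) :
    ∃ C : ℝ, ∀ y : ℝ, 0 < y →
      ∫ x in Ioi (0:ℝ), x⁻¹ * ∫ t in Ioi (0:ℝ), TB β t x y * t ^ (-(1:ℝ)/2) ≤ C := by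
  refine ⟨∑' n, bA β n, fun y hy => ?_⟩
  have hC0 : 0 ≤ ∑' n, bA β n := tsum_nonneg (fun n => bA_nonneg hβ n)
  have houter : ∀ x ∈ Ioi (0:ℝ),
      0 ≤ x⁻¹ * ∫ t in Ioi (0:ℝ), TB β t x y * t ^ (-(1:ℝ)/2) := by
    intro x hx
    rw [mem_Ioi] at hx
    refine mul_nonneg (by positivity) (setIntegral_nonneg measurableSet_Ioi ?_)
    intro t ht
    exact TB_tp_nonneg hβ hy ht hx
  by_cases H : IntegrableOn
    (fun x => x⁻¹ * ∫ t in Ioi (0:ℝ), TB β t x y * t ^ (-(1:ℝ)/2)) (Ioi 0)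
  swap
  · rw [integral_undef H]; exact hC0
  rw [integral_eq_lintegral_of_nonneg_ae
    ((ae_restrict_iff' measurableSet_Ioi).mpr (ae_of_all _ houter)) H.aestronglyMeasurable]
  refine ENNReal.toReal_le_of_le_ofReal hC0 ?_
  calc ∫⁻ x in Ioi (0:ℝ), ENNReal.ofReal (x⁻¹ * ∫ t in Ioi (0:ℝ), TB β t x y * t ^ (-(1:ℝ)/2))
      ≤ ∫⁻ x in Ioi (0:ℝ), ∑' n, ∫⁻ t in Ioi (0:ℝ), ENNReal.ofReal (bG β y n t x) := by
        apply lintegral_mono_ae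
        filter_upwards [ae_restrict_mem measurableSet_Ioi] with x hx
        rw [mem_Ioi] at hx
        have hinv : (0:ℝ) ≤ x⁻¹ := by positivity
        calc ENNReal.ofReal (x⁻¹ * ∫ t in Ioi (0:ℝ), TB β t x y * t ^ (-(1:ℝ)/2))
            = ENNReal.ofReal x⁻¹
              * ENNReal.ofReal (∫ t in Ioi (0:ℝ), TB β t x y * t ^ (-(1:ℝ)/2)) :=
              ENNReal.ofReal_mul hinv
          _ ≤ ENNReal.ofReal x⁻¹
              * ∫⁻ t in Ioi (0:ℝ), ENNReal.ofReal (TB β t x y * t ^ (-(1:ℝ)/2)) := by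
              refine mul_le_mul_right (ofReal_integral_le ?_) _
              filter_upwards [ae_restrict_mem measurableSet_Ioi] with t ht
              exact TB_tp_nonneg hβ hy ht hx
          _ = ∫⁻ t in Ioi (0:ℝ),
                ENNReal.ofReal x⁻¹ * ENNReal.ofReal (TB β t x y * t ^ (-(1:ℝ)/2)) :=
              (lintegral_const_mul' _ _ ENNReal.ofReal_ne_top).symm
          _ ≤ ∫⁻ t in Ioi (0:ℝ), ∑' n, ENNReal.ofReal (x⁻¹ * bP β y n t x) := by
              apply lintegral_mono_ae
              filter_upwards [ae_restrict_mem measurableSet_Ioi] with t ht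
              rw [mem_Ioi] at ht
              rw [← ENNReal.ofReal_mul hinv, bTB_eq, ← tsum_mul_left]
              exact ofReal_tsum_le (fun n => mul_nonneg hinv (bP_nonneg hβ hy n ht hx))
          _ = ∑' n, ∫⁻ t in Ioi (0:ℝ), ENNReal.ofReal (x⁻¹ * bP β y n t x) :=
              lintegral_tsum (fun n => (bP_meas_t β y x n).aemeasurable)
          _ = ∑' n, ∫⁻ t in Ioi (0:ℝ), ENNReal.ofReal (bG β y n t x) := by
              refine tsum_congr (fun n => ?_)
              refine setLIntegral_congr_fun measurableSet_Ioi ?_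
              intro t ht
              dsimp only
              rw [term_eq hβ hy n ht hx]
    _ = ∑' n, ∫⁻ x in Ioi (0:ℝ), ∫⁻ t in Ioi (0:ℝ), ENNReal.ofReal (bG β y n t x) :=
        lintegral_tsum (fun n =>
          ((Measurable.lintegral_prod_right
            (f := fun x t => ENNReal.ofReal (bG β y n t x)) (bG_meas β y n))).aemeasurable)
    _ = ∑' n, ENNReal.ofReal (bA β n) := tsum_congr (fun n => bG_lint hβ hy n)
    _ = ENNReal.ofReal (∑' n, bA β n) :=
        (ENNReal.ofReal_tsum_of_nonneg (fun n => bA_nonneg hβ n) (bA_summable hβ)).symm
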